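/- Fix real numbers 0 < t < 1 and 0 < q < 1, integers r ≥ 2 and n ≥ 1, and a composition λ ∈ {0,…,r}ⁿ. Let λ* be defined by λ*_j = max(λ_j − 1, 0) and m_i(λ) = #{j : λ_j = i}. Then the series T_{λ,λ*}(1,…,1) = Σ_{m∈ℕ^{r−1}} ⟨e_m, L̃_{λ_1,λ*_1}(1)·L̃_{λ_2,λ*_2}(1)···L̃_{λ_n,λ*_n}(1)·s·e_m⟩ converges and equals Π_{i=1}^{r−1} (1 − q^{i}·t^{m_1(λ)+m_2(λ)+⋯+m_i(λ)})^{-1}. -/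

import Mathlib

/-!
STATEMENT 15 (Proposition 5.3): the diagonal transition matrix element
`T_{λ,λ*}(1,…,1) = Tr[L̃_{λ_1,λ*_1}(1)⋯L̃_{λ_n,λ*_n}(1)·s]` converges and equals
`Π_{i=1}^{r−1} (1 − q^i·t^{m_1(λ)+⋯+m_i(λ)})^{-1}`.
-/

open scoped BigOperators

noncomputable section

/-- The multi-family Fock space: finitely supported functions on `ℕ^d`
(for families `2,…,r` one takes `d = r − 1`; family `p` corresponds to coordinate `p − 2`). -/
abbrev Fock (d : ℕ) : Type := (Fin d → ℕ) →₀ ℝ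

/-- The annihilation operator of family index `p`: `a_p·e_m = √(1−t^{m_p})·e_{m−δ_p}`
(automatically zero when `m_p = 0` since `√(1−t⁰) = 0`). -/
def aOp (t : ℝ) (d : ℕ) (p : Fin d) : Module.End ℝ (Fock d) :=
  Finsupp.lsum ℝ fun m =>
    Real.sqrt (1 - t ^ (m p)) • Finsupp.lsingle (Function.update m p (m p - 1))

/-- The creation operator of family index `p`: `a†_p·e_m = √(1−t^{m_p+1})·e_{m+δ_p}`. -/
def adOp (t : ℝ) (d : ℕ) (p : Fin d) : Module.End ℝ (Fock d) :=
  Finsupp.lsum ℝ fun m =>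
    Real.sqrt (1 - t ^ (m p + 1)) • Finsupp.lsingle (Function.update m p (m p + 1))

/-- The number operator of family index `p`: `k_p·e_m = t^{m_p}·e_m`. -/
def kOp (t : ℝ) (d : ℕ) (p : Fin d) : Module.End ℝ (Fock d) :=
  Finsupp.lsum ℝ fun m => (t ^ (m p) : ℝ) • Finsupp.lsingle m

/-- The twist operator: `s·e_m = (Π_{p=2}^{r} q^{(p−1)·m_p})·e_m`
(family `p` corresponds to coordinate `p − 2`, so the exponent is `(idx+1)·m_idx`). -/
def sOp (q : ℝ) (d : ℕ) : Module.End ℝ (Fock d) :=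
  Finsupp.lsum ℝ fun m =>
    (∏ p : Fin d, q ^ ((p.val + 1) * m p)) • Finsupp.lsingle m

/-- The oscillator `a_i` of family `i` (`2 ≤ i ≤ r`), acting on `Fock (r−1)`. -/
def aFam (t : ℝ) (r : ℕ) (i : ℕ) : Module.End ℝ (Fock (r - 1)) :=
  if h : 2 ≤ i ∧ i ≤ r then aOp t (r - 1) ⟨i - 2, by omega⟩ else 0

/-- The oscillator `a†_i` of family `i` (`2 ≤ i ≤ r`), acting on `Fock (r−1)`. -/
def adFam (t : ℝ) (r : ℕ) (i : ℕ) : Module.End ℝ (Fock (r - 1)) :=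
  if h : 2 ≤ i ∧ i ≤ r then adOp t (r - 1) ⟨i - 2, by omega⟩ else 0

/-- The oscillator `k_i` of family `i` (`2 ≤ i ≤ r`), acting on `Fock (r−1)`. -/
def kFam (t : ℝ) (r : ℕ) (i : ℕ) : Module.End ℝ (Fock (r - 1)) :=
  if h : 2 ≤ i ∧ i ≤ r then kOp t (r - 1) ⟨i - 2, by omega⟩ else 0

/-- The ordered product `k_{i+1}·k_{i+2}⋯k_r`. -/
def kprodFam (t : ℝ) (r : ℕ) (i : ℕ) : Module.End ℝ (Fock (r - 1)) :=
  ((List.range' (i + 1) (r - i)).map (kFam t r)).prod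

/-- The entry `L̃_{ij}(x)` of the reduced `(r+1) × r` matrix of Fock-space operators. -/
def LtilOp (t : ℝ) (r : ℕ) (x : ℝ) (i j : ℕ) : Module.End ℝ (Fock (r - 1)) :=
  if i = 0 then (if j = 0 then 1 else aFam t r (j + 1))
  else if j = 0 then
    (if i = 1 then x • kprodFam t r 1 else x • (adFam t r i * kprodFam t r i))
  else if i = j + 1 then x • kprodFam t r i
  else if j + 1 < i then x • (aFam t r (j + 1) * adFam t r i * kprodFam t r i)
  else 0

/-! ### Auxiliary lemmas -/

lemma kOp_single (t : ℝ) (d : ℕ) (p : Fin d) (m : Fin d → ℕ) :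
    kOp t d p (Finsupp.single m 1) = (t ^ (m p)) • Finsupp.single m 1 := by
  simp [kOp, Finsupp.lsum_single, Finsupp.lsingle]

lemma sOp_single (q : ℝ) (d : ℕ) (m : Fin d → ℕ) :
    sOp q d (Finsupp.single m 1) =
      (∏ p : Fin d, q ^ ((p.val + 1) * m p)) • Finsupp.single m 1 := by
  simp [sOp, Finsupp.lsum_single, Finsupp.lsingle]

lemma map_prod_diag {d : ℕ} {ι : Type*} (v : Fock d) (l : List ι)
    (g : ι → Module.End ℝ (Fock d)) (c : ι → ℝ)
    (h : ∀ p ∈ l, g p v = c p • v) :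
    ((l.map g).prod) v = (l.map c).prod • v := by
  induction l with
  | nil => simp
  | cons a tl ih =>
    simp only [List.map_cons, List.prod_cons, Module.End.mul_apply,
      ih (fun p hp => h p (List.mem_cons_of_mem a hp))]
    rw [map_smul, h a (List.mem_cons_self (a := a) (l := tl)), smul_smul, mul_comm]

lemma list_range'_map_prod (c : ℕ → ℝ) :
    ∀ (nn s : ℕ), ((List.range' s nn).map c).prod = ∏ j ∈ Finset.range nn, c (s + j) := by
  intro nn
  induction nn with
  | zero => simp
  | succ nn ih =>
    intro s
    rw [List.range'_succ (s := s) (n := nn) (step := 1), List.map_cons, List.prod_cons, ih (s + 1),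
      Finset.prod_range_succ', mul_comm]
    congr 1
    · exact Finset.prod_congr rfl fun j _ => by rw [show s + 1 + j = s + (j + 1) by omega]

/-- the multiplicity `m (p-2)` extended to a function of a natural index `p`. -/
def Mnat (r : ℕ) (m : Fin (r - 1) → ℕ) (p : ℕ) : ℕ :=
  if h : p - 2 < r - 1 then m ⟨p - 2, h⟩ else 0

lemma kFam_single (t : ℝ) (r : ℕ) (p : ℕ) (hp : 2 ≤ p) (hpr : p ≤ r) (m : Fin (r - 1) → ℕ) :
    kFam t r p (Finsupp.single m 1) = (t ^ (Mnat r m p)) • Finsupp.single m 1 := by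
  rw [kFam, dif_pos ⟨hp, hpr⟩, kOp_single]
  have h2 : Mnat r m p = m ⟨p - 2, by omega⟩ := by rw [Mnat, dif_pos (by omega)]
  rw [h2]

lemma kprod_single (t : ℝ) (r v : ℕ) (hv : 1 ≤ v) (hvr : v ≤ r) (m : Fin (r - 1) → ℕ) :
    kprodFam t r v (Finsupp.single m 1) =
      (∏ jj ∈ Finset.range (r - v), t ^ (Mnat r m (v + 1 + jj))) • Finsupp.single m 1 := by
  rw [kprodFam,
    map_prod_diag (Finsupp.single m 1) (List.range' (v + 1) (r - v)) (kFam t r)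
      (fun p => t ^ (Mnat r m p)) (fun p hp => by
        rw [List.mem_range'_1] at hp
        exact kFam_single t r p (by omega) (by omega) m),
    list_range'_map_prod]

lemma scalar_eq (t : ℝ) (r v : ℕ) (hv : 1 ≤ v) (hvr : v ≤ r) (m : Fin (r - 1) → ℕ) :
    (∏ jj ∈ Finset.range (r - v), t ^ (Mnat r m (v + 1 + jj)))
      = ∏ idx ∈ Finset.range (r - 1),
          (if 1 ≤ v ∧ v ≤ idx + 1 then t ^ (Mnat r m (idx + 2)) else 1) := by
  rw [← Finset.prod_filter]
  have hset : Finset.filter (fun idx => 1 ≤ v ∧ v ≤ idx + 1) (Finset.range (r - 1))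
      = Finset.Ico (v - 1) (r - 1) := by
    ext idx
    simp only [Finset.mem_filter, Finset.mem_range, Finset.mem_Ico]
    omega
  rw [hset, Finset.prod_Ico_eq_prod_range, show r - 1 - (v - 1) = r - v by omega]
  exact Finset.prod_congr rfl fun jj _ => by
    rw [show v - 1 + jj + 2 = v + 1 + jj by omega]

lemma Ltil_single (t : ℝ) (r v : ℕ) (hvr : v ≤ r) (m : Fin (r - 1) → ℕ) :
    LtilOp t r 1 v (v - 1) (Finsupp.single m 1)
      = (∏ idx ∈ Finset.range (r - 1),
          (if 1 ≤ v ∧ v ≤ idx + 1 then t ^ (Mnat r m (idx + 2)) else 1))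
          • Finsupp.single m 1 := by
  match v with
  | 0 =>
    simp [LtilOp]
  | 1 =>
    have h1 : LtilOp t r 1 1 (1 - 1) = (1 : ℝ) • kprodFam t r 1 := by
      simp [LtilOp]
    rw [h1, one_smul, kprod_single t r 1 le_rfl (by omega) m,
      scalar_eq t r 1 le_rfl (by omega) m]
  | (w + 2) =>
    have h1 : LtilOp t r 1 (w + 2) (w + 2 - 1) = (1 : ℝ) • kprodFam t r (w + 2) := by
      simp [LtilOp, show w + 2 - 1 = w + 1 from rfl]
    rw [h1, one_smul, kprod_single t r (w + 2) (by omega) hvr m,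
      scalar_eq t r (w + 2) (by omega) hvr m]

lemma card_filter_le_eq_sum {n r : ℕ} (lam : Fin n → Fin (r + 1)) (i : ℕ) :
    (Finset.univ.filter fun j : Fin n => 1 ≤ (lam j).val ∧ (lam j).val ≤ i).card
      = ∑ kk ∈ Finset.Icc 1 i,
          (Finset.univ.filter fun j : Fin n => (lam j).val = kk).card := by
  rw [Finset.card_eq_sum_card_fiberwise (f := fun j => (lam j).val)
      (t := Finset.Icc 1 i) (fun x hx => by
        simp only [Finset.mem_coe, Finset.mem_filter] at hx
        simp only [Finset.mem_coe, Finset.mem_Icc]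
        omega)]
  refine Finset.sum_congr rfl fun kk hkk => ?_
  simp only [Finset.mem_Icc] at hkk
  congr 1
  rw [Finset.filter_filter]
  apply Finset.filter_congr
  intro j _
  constructor
  · rintro ⟨_, h⟩; exact h
  · intro h; exact ⟨⟨by omega, by omega⟩, h⟩

lemma hasSum_pi_geom : ∀ (d : ℕ) (x : Fin d → ℝ), (∀ i, 0 ≤ x i) → (∀ i, x i < 1) →
    HasSum (fun m : Fin d → ℕ => ∏ i, (x i) ^ (m i)) (∏ i, (1 - x i)⁻¹) := by
  intro d
  induction d with
  | zero =>
    intro x _ _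
    simpa using hasSum_fintype (fun m : Fin 0 → ℕ => ∏ i, (x i) ^ (m i))
  | succ d ih =>
    intro x h0 h1
    have h0' : HasSum (fun nn : ℕ => (x 0) ^ nn) (1 - x 0)⁻¹ :=
      hasSum_geometric_of_lt_one (h0 0) (h1 0)
    have hrest : HasSum (fun m : Fin d → ℕ => ∏ i, (x i.succ) ^ (m i))
        (∏ i : Fin d, (1 - x i.succ)⁻¹) := ih _ (fun i => h0 _) (fun i => h1 _)
    have hsummable : Summable (fun p : ℕ × (Fin d → ℕ) =>
        (x 0) ^ p.1 * ∏ i, (x i.succ) ^ (p.2 i)) := by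
      apply Summable.mul_of_nonneg h0'.summable hrest.summable
      · intro nn; exact pow_nonneg (h0 0) nn
      · intro mm; exact Finset.prod_nonneg fun i _ => pow_nonneg (h0 _) _
    have hprod := h0'.mul hrest hsummable
    rw [show (∏ i : Fin (d+1), (1 - x i)⁻¹)
        = (1 - x 0)⁻¹ * ∏ i : Fin d, (1 - x i.succ)⁻¹ from Fin.prod_univ_succ _]
    refine (Equiv.hasSum_iff (Fin.consEquiv (fun _ : Fin (d+1) => ℕ))).mp ?_
    refine hprod.congr fun p => ?_
    simp [Fin.consEquiv, Fin.prod_univ_succ]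

theorem diagonal_transition_matrix_element
    (t q : ℝ) (ht0 : 0 < t) (ht1 : t < 1) (hq0 : 0 < q) (hq1 : q < 1)
    (r n : ℕ) (hr : 2 ≤ r) (hn : 1 ≤ n)
    (lam : Fin n → Fin (r + 1)) :
    HasSum
      (fun m : Fin (r - 1) → ℕ =>
        (((List.ofFn fun p : Fin n =>
              LtilOp t r 1 (lam p).val ((lam p).val - 1)).prod
            * sOp q (r - 1)) (Finsupp.single m 1)) m)
      (∏ i ∈ Finset.Icc 1 (r - 1),
        (1 - q ^ i * t ^ (∑ kk ∈ Finset.Icc 1 i,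
            (Finset.univ.filter fun j : Fin n => (lam j).val = kk).card))⁻¹) := by
  classical
  have hd : ∀ i : Fin (r - 1), (i : ℕ) + 1 ≤ r - 1 := fun i => i.isLt
  set N : ℕ → ℕ := fun i => ∑ kk ∈ Finset.Icc 1 i,
      (Finset.univ.filter fun j : Fin n => (lam j).val = kk).card with hNdef
  have hx0 : ∀ i : Fin (r - 1), 0 ≤ q ^ ((i : ℕ) + 1) * t ^ (N ((i : ℕ) + 1)) :=
    fun i => mul_nonneg (pow_nonneg hq0.le _) (pow_nonneg ht0.le _)
  have hx1 : ∀ i : Fin (r - 1), q ^ ((i : ℕ) + 1) * t ^ (N ((i : ℕ) + 1)) < 1 := by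
    intro i
    have hA : q ^ ((i : ℕ) + 1) < 1 := pow_lt_one₀ hq0.le hq1 (by omega)
    have hB : t ^ (N ((i : ℕ) + 1)) ≤ 1 := pow_le_one₀ ht0.le ht1.le
    have hC : 0 < q ^ ((i : ℕ) + 1) := pow_pos hq0 _
    have hDD : 0 ≤ t ^ (N ((i : ℕ) + 1)) := pow_nonneg ht0.le _
    nlinarith
  have main := hasSum_pi_geom (r - 1)
    (fun i : Fin (r - 1) => q ^ ((i : ℕ) + 1) * t ^ (N ((i : ℕ) + 1))) hx0 hx1
  have key : ∀ m : Fin (r - 1) → ℕ,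
      (((List.ofFn fun p : Fin n =>
            LtilOp t r 1 (lam p).val ((lam p).val - 1)).prod
          * sOp q (r - 1)) (Finsupp.single m 1)) m
        = ∏ i : Fin (r - 1), (q ^ ((i : ℕ) + 1) * t ^ (N ((i : ℕ) + 1))) ^ (m i) := by
    intro m
    have hMnat : ∀ i : Fin (r - 1), Mnat r m ((i : ℕ) + 2) = m i := by
      intro i
      rw [Mnat, dif_pos (by omega)]
      exact congrArg m (Fin.ext (by simp))
    have hL : (List.ofFn fun p : Fin n =>
          LtilOp t r 1 (lam p).val ((lam p).val - 1)).prod (Finsupp.single m 1)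
        = (∏ p : Fin n, ∏ idx ∈ Finset.range (r - 1),
            (if 1 ≤ (lam p).val ∧ (lam p).val ≤ idx + 1
              then t ^ (Mnat r m (idx + 2)) else 1)) • Finsupp.single m 1 := by
      rw [List.ofFn_eq_map,
        map_prod_diag (Finsupp.single m 1) (List.finRange n)
          (fun p : Fin n => LtilOp t r 1 (lam p).val ((lam p).val - 1))
          (fun p : Fin n => ∏ idx ∈ Finset.range (r - 1),
            (if 1 ≤ (lam p).val ∧ (lam p).val ≤ idx + 1
              then t ^ (Mnat r m (idx + 2)) else 1))
          (fun p _ => Ltil_single t r (lam p).val (by omega) m),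
        ← List.ofFn_eq_map, List.prod_ofFn]
    rw [Module.End.mul_apply, sOp_single, map_smul, hL, smul_smul, Finsupp.smul_apply,
      Finsupp.single_eq_same, smul_eq_mul, mul_one]
    have hD : (∏ p : Fin n, ∏ idx ∈ Finset.range (r - 1),
          (if 1 ≤ (lam p).val ∧ (lam p).val ≤ idx + 1
            then t ^ (Mnat r m (idx + 2)) else 1))
        = ∏ idx ∈ Finset.range (r - 1),
            (t ^ (Mnat r m (idx + 2))) ^ (N (idx + 1)) := by
      rw [Finset.prod_comm]
      refine Finset.prod_congr rfl fun idx _ => ?_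
      rw [← Finset.prod_filter, Finset.prod_const]
      congr 1
      exact card_filter_le_eq_sum lam (idx + 1)
    rw [hD, ← Fin.prod_univ_eq_prod_range
      (fun idx => (t ^ (Mnat r m (idx + 2))) ^ (N (idx + 1))) (r - 1),
      ← Finset.prod_mul_distrib]
    refine Finset.prod_congr rfl fun i _ => ?_
    rw [hMnat i, mul_pow, ← pow_mul, ← pow_mul, ← pow_mul,
      Nat.mul_comm (m i) (N ((i : ℕ) + 1))]
  have hfun : (fun m : Fin (r - 1) → ℕ =>
      (((List.ofFn fun p : Fin n =>
            LtilOp t r 1 (lam p).val ((lam p).val - 1)).prod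
          * sOp q (r - 1)) (Finsupp.single m 1)) m)
      = fun m : Fin (r - 1) → ℕ =>
          ∏ i : Fin (r - 1), (q ^ ((i : ℕ) + 1) * t ^ (N ((i : ℕ) + 1))) ^ (m i) :=
    funext key
  have hRHS : (∏ i ∈ Finset.Icc 1 (r - 1), (1 - q ^ i * t ^ (N i))⁻¹)
      = ∏ i : Fin (r - 1), (1 - q ^ ((i : ℕ) + 1) * t ^ (N ((i : ℕ) + 1)))⁻¹ := by
    rw [Fin.prod_univ_eq_prod_range (fun i => (1 - q ^ (i + 1) * t ^ (N (i + 1)))⁻¹) (r - 1),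
      show Finset.Icc 1 (r - 1) = Finset.Ico 1 r by
        rw [← Finset.Ico_add_one_right_eq_Icc]; congr 1; omega,
      Finset.prod_Ico_eq_prod_range]
    exact Finset.prod_congr rfl fun j _ => by rw [Nat.add_comm 1 j]
  rw [hfun]
  rw [show (∏ i ∈ Finset.Icc 1 (r - 1),
      (1 - q ^ i * t ^ (∑ kk ∈ Finset.Icc 1 i,
          (Finset.univ.filter fun j : Fin n => (lam j).val = kk).card))⁻¹)
    = ∏ i ∈ Finset.Icc 1 (r - 1), (1 - q ^ i * t ^ (N i))⁻¹ from rfl, hRHS]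
  exact main


end
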